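/- The function I_b^δ defined piecewise by I_b^δ(d) = -δ(d-b)²/(8d) for d ≤ -b, δb/2 for |d| < b, 0 for d = b, and δ(2d-b)/2 for d > b, has compact level sets: for every c ≥ 0, the set {d ∈ ℝ : I_b^δ(d) ≤ c} is compact. -/

import Mathlib

theorem stmt_2 (b δ : ℝ) (hb : 0 < b) (hδ : 0 < δ) (c : ℝ) (hc : 0 ≤ c) :
    IsCompact {d : ℝ |
      (if d ≤ -b then -δ * (d - b)^2 / (8 * d)
      else if |d| < b then δ * b / 2
      else if d = b then 0
      else δ * (2 * d - b) / 2) ≤ c} := by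
  obtain ⟨M, hM⟩ : ∃ M : ℝ, M = b + 8 * c / δ := ⟨_, rfl⟩
  have hcδ : 0 ≤ 8 * c / δ := by positivity
  have hM0 : 0 < M := by rw [hM]; positivity
  -- the "left branch" closed set
  have hA : IsClosed (Set.Iic (-b) ∩ (fun d : ℝ => -δ * (d - b)^2 / (8 * d)) ⁻¹' Set.Iic c) := by
    apply ContinuousOn.preimage_isClosed_of_isClosed ?_ isClosed_Iic isClosed_Iic
    apply ContinuousOn.div (by fun_prop) (by fun_prop)
    intro x hx
    have hx' : x ≤ -b := hx
    nlinarith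
  have hval : -δ * (-b - b)^2 / (8 * -b) = δ * b / 2 := by
    field_simp
    ring
  -- boundedness
  have hsub : {d : ℝ |
      (if d ≤ -b then -δ * (d - b)^2 / (8 * d)
      else if |d| < b then δ * b / 2
      else if d = b then 0
      else δ * (2 * d - b) / 2) ≤ c} ⊆ Set.Icc (-M) M := by
    intro d hd
    simp only [Set.mem_setOf_eq] at hd
    split_ifs at hd with h1 h2 h3
    · have hd0 : d < 0 := by linarith
      have h8 : 8 * d < 0 := by linarith
      rw [div_le_iff_of_neg h8] at hd
      have key : -(8 * c) ≤ δ * d := by nlinarith [mul_pos hδ hb, sq_nonneg (d - b)]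
      have key2 : -(8 * c) / δ ≤ d := by
        rw [div_le_iff₀ hδ]; nlinarith
      have : -(8 * c) / δ = -(8 * c / δ) := by ring
      constructor
      · rw [hM]; rw [this] at key2; linarith
      · linarith
    · obtain ⟨h2a, h2b⟩ := abs_lt.mp h2
      constructor <;> [linarith; linarith]
    · subst h3
      constructor <;> [linarith; linarith]
    · push_neg at h1 h2
      have hbd : b < d := by
        rcases le_abs.mp h2 with h | h
        · exact lt_of_le_of_ne h (Ne.symm h3)
        · linarith
      have h1' : δ * d ≤ c + δ * b / 2 := by linarith
      have hdm : d ≤ M := by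
        rw [hM]
        rw [show b + 8 * c / δ = (δ * b + 8 * c) / δ by field_simp]
        rw [le_div_iff₀ hδ]
        nlinarith
      exact ⟨by linarith, hdm⟩
  -- closedness
  have hclosed : IsClosed {d : ℝ |
      (if d ≤ -b then -δ * (d - b)^2 / (8 * d)
      else if |d| < b then δ * b / 2
      else if d = b then 0
      else δ * (2 * d - b) / 2) ≤ c} := by
    rcases le_or_gt (δ * b / 2) c with hcase | hcase
    · have hbc : b ≤ c / δ + b / 2 := by
        rw [show c / δ + b / 2 = (c + δ * b / 2) / δ by field_simp, le_div_iff₀ hδ]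
        nlinarith
      have hset : {d : ℝ |
          (if d ≤ -b then -δ * (d - b)^2 / (8 * d)
          else if |d| < b then δ * b / 2
          else if d = b then 0
          else δ * (2 * d - b) / 2) ≤ c} =
          (Set.Iic (-b) ∩ (fun d : ℝ => -δ * (d - b)^2 / (8 * d)) ⁻¹' Set.Iic c)
          ∪ Set.Icc (-b) (c / δ + b / 2) := by
        ext d
        simp only [Set.mem_setOf_eq, Set.mem_union, Set.mem_inter_iff, Set.mem_Iic,
          Set.mem_preimage, Set.mem_Icc]
        split_ifs with h1 h2 h3
        · constructor
          · intro h; exact Or.inl ⟨h1, h⟩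
          · rintro (⟨_, h⟩ | ⟨h, _⟩)
            · exact h
            · have hdb : d = -b := le_antisymm h1 h
              subst hdb
              rw [hval]; exact hcase
        · rw [abs_lt] at h2
          constructor
          · intro _
            exact Or.inr ⟨by linarith, by linarith⟩
          · intro _; exact hcase
        · subst h3
          constructor
          · intro _
            exact Or.inr ⟨by linarith, hbc⟩
          · intro _; exact hc
        · push_neg at h1 h2
          have hbd : b < d := by
            rcases le_abs.mp h2 with h | h
            · exact lt_of_le_of_ne h (Ne.symm h3)
            · linarith
          constructor
          · intro h
            refine Or.inr ⟨by linarith, ?_⟩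
            rw [show c / δ + b / 2 = (c + δ * b / 2) / δ by field_simp, le_div_iff₀ hδ]
            nlinarith
          · rintro (⟨h, _⟩ | ⟨_, h⟩)
            · linarith
            · rw [show c / δ + b / 2 = (c + δ * b / 2) / δ by field_simp,
                le_div_iff₀ hδ] at h
              nlinarith
      rw [hset]
      exact hA.union isClosed_Icc
    · have hset : {d : ℝ |
          (if d ≤ -b then -δ * (d - b)^2 / (8 * d)
          else if |d| < b then δ * b / 2
          else if d = b then 0
          else δ * (2 * d - b) / 2) ≤ c} =
          (Set.Iic (-b) ∩ (fun d : ℝ => -δ * (d - b)^2 / (8 * d)) ⁻¹' Set.Iic c)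
          ∪ {b} := by
        ext d
        simp only [Set.mem_setOf_eq, Set.mem_union, Set.mem_inter_iff, Set.mem_Iic,
          Set.mem_preimage, Set.mem_singleton_iff]
        split_ifs with h1 h2 h3
        · constructor
          · intro h; exact Or.inl ⟨h1, h⟩
          · rintro (⟨_, h⟩ | h)
            · exact h
            · subst h; linarith
        · rw [abs_lt] at h2
          constructor
          · intro h; linarith
          · rintro (⟨h, _⟩ | h)
            · linarith
            · subst h; linarith
        · subst h3
          constructor
          · intro _; exact Or.inr rfl
          · intro _; exact hc
        · push_neg at h1 h2
          have hbd : b < d := by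
            rcases le_abs.mp h2 with h | h
            · exact lt_of_le_of_ne h (Ne.symm h3)
            · linarith
          constructor
          · intro h; nlinarith
          · rintro (⟨h, _⟩ | h)
            · linarith
            · exact absurd h h3
      rw [hset]
      exact hA.union isClosed_singleton
  exact (isCompact_Icc).of_isClosed_subset hclosed hsub
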